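/- Let F_θ be a symmetric positive definite p×p matrix, F_η a symmetric positive definite m×m matrix, and A a p×m matrix such that the block matrix F² = [[F_θ², A], [Aᵀ, F_η²]] is positive definite. Fix Y = (Y_θ, Y_η) ∈ ℝ^p × ℝ^m and let L(θ, η) = −½ ((θ,η) − Y)ᵀ F² ((θ,η) − Y). Given any starting point θ₀ ∈ ℝ^p, define recursively for k ≥ 1: η_k as the unique maximizer of η ↦ L(θ_{k−1}, η) and θ_k as the unique maximizer of θ ↦ L(θ, η_k); these maximizers exist and are unique. Then with M₀ := F_θ⁻¹ A F_η⁻² Aᵀ F_θ⁻¹ one has for every k ≥ 0 the identity F_θ(θ_k − Y_θ) = M₀ᵏ F_θ(θ₀ − Y_θ); in particular, if ν := ‖M₀‖ < 1 (spectral norm), then ‖F_θ(θ_k − θ̃)‖ ≤ νᵏ ‖F_θ(θ₀ − θ̃)‖, where (θ̃, η̃) = Y is the unique global maximizer of L. -/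

import Mathlib

open Matrix

/-- Euclidean norm of a vector in `ℝ^n`. -/
noncomputable def euclNorm {n : Type*} [Fintype n] (v : n → ℝ) : ℝ :=
  Real.sqrt (∑ i, v i ^ 2)

/-- Spectral (L2 operator) norm of a real matrix. -/
noncomputable def specNorm {m n : Type*} [Fintype m] [Fintype n] [DecidableEq n]
    (M : Matrix m n ℝ) : ℝ :=
  ‖LinearMap.toContinuousLinearMap (Matrix.toEuclideanLin M)‖

lemma euclNorm_eq {n : Type*} [Fintype n] (v : n → ℝ) :
    euclNorm v = ‖(WithLp.equiv 2 (n → ℝ)).symm v‖ := by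
  rw [EuclideanSpace.norm_eq, euclNorm]
  congr 1
  refine Finset.sum_congr rfl fun i _ => ?_
  simp [Real.norm_eq_abs, sq_abs]

lemma euclNorm_mulVec_le {n m : Type*} [Fintype n] [Fintype m] [DecidableEq n]
    (M : Matrix m n ℝ) (v : n → ℝ) :
    euclNorm (M.mulVec v) ≤ specNorm M * euclNorm v := by
  rw [euclNorm_eq, euclNorm_eq]
  have key : (WithLp.equiv 2 (m → ℝ)).symm (M.mulVec v) =
      Matrix.toEuclideanLin M ((WithLp.equiv 2 (n → ℝ)).symm v) := by
    rfl
  rw [key]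
  have := (LinearMap.toContinuousLinearMap (Matrix.toEuclideanLin M)).le_opNorm
    ((WithLp.equiv 2 (n → ℝ)).symm v)
  simpa [specNorm] using this

lemma elim_sub_elim {α β : Type*} (a c : α → ℝ) (b d : β → ℝ) :
    Sum.elim a b - Sum.elim c d = Sum.elim (a - c) (b - d) := by
  funext i; cases i <;> simp

lemma quadKey {n : Type*} [Fintype n] (B : Matrix n n ℝ) (hB : Bᵀ = B) (z w : n → ℝ)
    (h : B.mulVec w ⬝ᵥ (z - w) = 0) :
    z ⬝ᵥ B.mulVec z = w ⬝ᵥ B.mulVec w + (z - w) ⬝ᵥ B.mulVec (z - w) := by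
  have hsym : ∀ a b : n → ℝ, a ⬝ᵥ B.mulVec b = B.mulVec a ⬝ᵥ b := by
    intro a b
    rw [Matrix.dotProduct_mulVec, ← Matrix.mulVec_transpose, hB]
  have hz : z = w + (z - w) := by ring
  calc z ⬝ᵥ B.mulVec z = (w + (z - w)) ⬝ᵥ B.mulVec (w + (z - w)) := by rw [← hz]
    _ = w ⬝ᵥ B.mulVec w + w ⬝ᵥ B.mulVec (z - w) + ((z - w) ⬝ᵥ B.mulVec w
        + (z - w) ⬝ᵥ B.mulVec (z - w)) := by
      simp only [Matrix.mulVec_add, dotProduct_add, add_dotProduct]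
      ring
    _ = w ⬝ᵥ B.mulVec w + (z - w) ⬝ᵥ B.mulVec (z - w) := by
      have h1 : w ⬝ᵥ B.mulVec (z - w) = 0 := by rw [hsym]; exact h
      have h2 : (z - w) ⬝ᵥ B.mulVec w = 0 := by
        rw [dotProduct_comm]; exact h
      rw [h1, h2]; ring

/-- Alternating maximization for the quadratic (toy Gaussian) functional
`L(θ, η) = −½ ((θ,η) − Y)ᵀ F² ((θ,η) − Y)`: the stepwise maximizers exist and are
unique, `Y` is the unique global maximizer, and with `M₀ = F_θ⁻¹ A F_η⁻² Aᵀ F_θ⁻¹`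
one has `F_θ(θ_k − Y_θ) = M₀ᵏ F_θ(θ₀ − Y_θ)`; if `‖M₀‖ < 1` this yields geometric
convergence to `θ̃ = Y_θ`. -/
theorem stmt1 {p m : ℕ} (Fθ : Matrix (Fin p) (Fin p) ℝ) (Fη : Matrix (Fin m) (Fin m) ℝ)
    (A : Matrix (Fin p) (Fin m) ℝ)
    (hFθ : Fθ.PosDef) (hFη : Fη.PosDef)
    (hF2 : (Matrix.fromBlocks (Fθ * Fθ) A Aᵀ (Fη * Fη)).PosDef)
    (Yθ : Fin p → ℝ) (Yη : Fin m → ℝ) (θ₀ : Fin p → ℝ)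
    (L : (Fin p → ℝ) → (Fin m → ℝ) → ℝ)
    (hL : ∀ θ η, L θ η = -(1/2) * ((Sum.elim θ η - Sum.elim Yθ Yη) ⬝ᵥ
        (Matrix.fromBlocks (Fθ * Fθ) A Aᵀ (Fη * Fη)).mulVec (Sum.elim θ η - Sum.elim Yθ Yη)))
    (M₀ : Matrix (Fin p) (Fin p) ℝ)
    (hM₀ : M₀ = Fθ⁻¹ * A * (Fη * Fη)⁻¹ * Aᵀ * Fθ⁻¹) :
    -- existence and uniqueness of the stepwise maximizers
    (∀ θ, ∃! ηm, ∀ η, L θ η ≤ L θ ηm) ∧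
    (∀ η, ∃! θm, ∀ θ, L θ η ≤ L θm η) ∧
    -- (θ̃, η̃) = Y is the unique global maximizer of L
    (∀ θ η, L θ η ≤ L Yθ Yη) ∧
    (∀ θ η, (∀ θ' η', L θ' η' ≤ L θ η) → θ = Yθ ∧ η = Yη) ∧
    -- the identity for the alternating sequence, and geometric convergence
    (∀ θ : ℕ → Fin p → ℝ, ∀ η : ℕ → Fin m → ℝ, θ 0 = θ₀ →
      (∀ k, ∀ η', L (θ k) η' ≤ L (θ k) (η (k + 1))) →
      (∀ k, ∀ θ', L θ' (η (k + 1)) ≤ L (θ (k + 1)) (η (k + 1))) →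
      ∀ k, Fθ.mulVec (θ k - Yθ) = (M₀ ^ k).mulVec (Fθ.mulVec (θ₀ - Yθ)) ∧
        (specNorm M₀ < 1 →
          euclNorm (Fθ.mulVec (θ k - Yθ))
            ≤ specNorm M₀ ^ k * euclNorm (Fθ.mulVec (θ₀ - Yθ)))) := by
  set B := Matrix.fromBlocks (Fθ * Fθ) A Aᵀ (Fη * Fη) with hBdef
  have hBsym : Bᵀ = B := hF2.1
  -- positivity facts
  have hqnn : ∀ z, 0 ≤ z ⬝ᵥ B.mulVec z := fun z => by simpa using hF2.posSemidef.dotProduct_mulVec_nonneg z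
  have hqpos : ∀ z, z ≠ 0 → 0 < z ⬝ᵥ B.mulVec z := fun z hz => by simpa using hF2.dotProduct_mulVec_pos hz
  have hzero : ∀ z, z ⬝ᵥ B.mulVec z = 0 → z = 0 := fun z h => by
    by_contra hne; exact (hqpos z hne).ne' h
  -- the diagonal blocks are positive definite
  have hFη2 : (Fη * Fη).PosDef := by
    refine Matrix.PosDef.of_dotProduct_mulVec_pos (by rw [Matrix.IsHermitian, Matrix.conjTranspose_mul, hFη.1]) fun x hx => ?_
    have hne : Sum.elim (0 : Fin p → ℝ) x ≠ 0 := by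
      intro hc; exact hx (funext fun i => congrFun hc (Sum.inr i))
    have := hF2.dotProduct_mulVec_pos hne
    simpa [hBdef, Matrix.fromBlocks_mulVec, sumElim_dotProduct_sumElim] using this
  have hFθ2 : (Fθ * Fθ).PosDef := by
    refine Matrix.PosDef.of_dotProduct_mulVec_pos (by rw [Matrix.IsHermitian, Matrix.conjTranspose_mul, hFθ.1]) fun x hx => ?_
    have hne : Sum.elim x (0 : Fin m → ℝ) ≠ 0 := by
      intro hc; exact hx (funext fun i => congrFun hc (Sum.inl i))
    have := hF2.dotProduct_mulVec_pos hne
    simpa [hBdef, Matrix.fromBlocks_mulVec, sumElim_dotProduct_sumElim] using this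
  have hθdet : IsUnit Fθ.det := (Matrix.isUnit_iff_isUnit_det Fθ).mp hFθ.isUnit
  have hθ2det : IsUnit (Fθ * Fθ).det := (Matrix.isUnit_iff_isUnit_det _).mp hFθ2.isUnit
  have hη2det : IsUnit (Fη * Fη).det := (Matrix.isUnit_iff_isUnit_det _).mp hFη2.isUnit
  -- the stepwise maximizers
  set ηstar : (Fin p → ℝ) → (Fin m → ℝ) :=
    fun θv => Yη - (Fη * Fη)⁻¹.mulVec (Aᵀ.mulVec (θv - Yθ)) with hηstar_def
  set θstar : (Fin m → ℝ) → (Fin p → ℝ) :=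
    fun ηv => Yθ - (Fθ * Fθ)⁻¹.mulVec (A.mulVec (ηv - Yη)) with hθstar_def
  have hηsub : ∀ θv, ηstar θv - Yη = -((Fη * Fη)⁻¹.mulVec (Aᵀ.mulVec (θv - Yθ))) := by
    intro θv; simp [hηstar_def]
  have hθsub : ∀ ηv, θstar ηv - Yθ = -((Fθ * Fθ)⁻¹.mulVec (A.mulVec (ηv - Yη))) := by
    intro ηv; simp [hθstar_def]
  -- key decomposition for the η-step
  have hηkey : ∀ θv ηv, L θv ηv = L θv (ηstar θv) + -(1/2) *
      (Sum.elim (0 : Fin p → ℝ) (ηv - ηstar θv) ⬝ᵥ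
        B.mulVec (Sum.elim 0 (ηv - ηstar θv))) := by
    intro θv ηv
    have hw : Sum.elim θv (ηstar θv) - Sum.elim Yθ Yη
        = Sum.elim (θv - Yθ) (ηstar θv - Yη) := elim_sub_elim _ _ _ _
    have hzw : (Sum.elim θv ηv - Sum.elim Yθ Yη) - (Sum.elim θv (ηstar θv) - Sum.elim Yθ Yη)
        = Sum.elim (0 : Fin p → ℝ) (ηv - ηstar θv) := by
      funext i; cases i <;> simp
    have hcomp : Aᵀ.mulVec (θv - Yθ) + (Fη * Fη).mulVec (ηstar θv - Yη) = 0 := by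
      rw [hηsub θv, Matrix.mulVec_neg, Matrix.mulVec_mulVec,
        Matrix.mul_nonsing_inv _ hη2det, Matrix.one_mulVec]
      simp
    have hperp : B.mulVec (Sum.elim θv (ηstar θv) - Sum.elim Yθ Yη) ⬝ᵥ
        ((Sum.elim θv ηv - Sum.elim Yθ Yη) - (Sum.elim θv (ηstar θv) - Sum.elim Yθ Yη)) = 0 := by
      rw [hzw, hw, hBdef, Matrix.fromBlocks_mulVec]
      simp [sumElim_dotProduct_sumElim, hcomp]
    have hq := quadKey B hBsym (Sum.elim θv ηv - Sum.elim Yθ Yη)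
      (Sum.elim θv (ηstar θv) - Sum.elim Yθ Yη) hperp
    rw [hL, hL, hq, hzw]; ring
  -- key decomposition for the θ-step
  have hθkey : ∀ ηv θv, L θv ηv = L (θstar ηv) ηv + -(1/2) *
      (Sum.elim (θv - θstar ηv) (0 : Fin m → ℝ) ⬝ᵥ
        B.mulVec (Sum.elim (θv - θstar ηv) 0)) := by
    intro ηv θv
    have hw : Sum.elim (θstar ηv) ηv - Sum.elim Yθ Yη
        = Sum.elim (θstar ηv - Yθ) (ηv - Yη) := elim_sub_elim _ _ _ _
    have hzw : (Sum.elim θv ηv - Sum.elim Yθ Yη) - (Sum.elim (θstar ηv) ηv - Sum.elim Yθ Yη)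
        = Sum.elim (θv - θstar ηv) (0 : Fin m → ℝ) := by
      funext i; cases i <;> simp
    have hcomp : (Fθ * Fθ).mulVec (θstar ηv - Yθ) + A.mulVec (ηv - Yη) = 0 := by
      rw [hθsub ηv, Matrix.mulVec_neg, Matrix.mulVec_mulVec,
        Matrix.mul_nonsing_inv _ hθ2det, Matrix.one_mulVec]
      simp
    have hperp : B.mulVec (Sum.elim (θstar ηv) ηv - Sum.elim Yθ Yη) ⬝ᵥ
        ((Sum.elim θv ηv - Sum.elim Yθ Yη) - (Sum.elim (θstar ηv) ηv - Sum.elim Yθ Yη)) = 0 := by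
      rw [hzw, hw, hBdef, Matrix.fromBlocks_mulVec]
      simp [sumElim_dotProduct_sumElim, hcomp]
    have hq := quadKey B hBsym (Sum.elim θv ηv - Sum.elim Yθ Yη)
      (Sum.elim (θstar ηv) ηv - Sum.elim Yθ Yη) hperp
    rw [hL, hL, hq, hzw]; ring
  -- maximality and uniqueness
  have hηmax : ∀ θv ηv, L θv ηv ≤ L θv (ηstar θv) := fun θv ηv => by
    have h1 := hηkey θv ηv
    have h2 := hqnn (Sum.elim (0 : Fin p → ℝ) (ηv - ηstar θv))
    linarith
  have hθmax : ∀ ηv θv, L θv ηv ≤ L (θstar ηv) ηv := fun ηv θv => by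
    have h1 := hθkey ηv θv
    have h2 := hqnn (Sum.elim (θv - θstar ηv) (0 : Fin m → ℝ))
    linarith
  have hηuniq : ∀ θv ηv, L θv (ηstar θv) ≤ L θv ηv → ηv = ηstar θv := by
    intro θv ηv hle
    have h1 := hηkey θv ηv
    have h2 := hqnn (Sum.elim (0 : Fin p → ℝ) (ηv - ηstar θv))
    have h0 : Sum.elim (0 : Fin p → ℝ) (ηv - ηstar θv) ⬝ᵥ
        B.mulVec (Sum.elim 0 (ηv - ηstar θv)) = 0 := by linarith
    have hv := hzero _ h0
    have : ηv - ηstar θv = 0 := funext fun i => congrFun hv (Sum.inr i)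
    exact sub_eq_zero.mp this
  have hθuniq : ∀ ηv θv, L (θstar ηv) ηv ≤ L θv ηv → θv = θstar ηv := by
    intro ηv θv hle
    have h1 := hθkey ηv θv
    have h2 := hqnn (Sum.elim (θv - θstar ηv) (0 : Fin m → ℝ))
    have h0 : Sum.elim (θv - θstar ηv) (0 : Fin m → ℝ) ⬝ᵥ
        B.mulVec (Sum.elim (θv - θstar ηv) 0) = 0 := by linarith
    have hv := hzero _ h0
    have : θv - θstar ηv = 0 := funext fun i => congrFun hv (Sum.inl i)
    exact sub_eq_zero.mp this
  -- global maximality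
  have hLY : L Yθ Yη = 0 := by rw [hL]; simp
  have hglob : ∀ θv ηv, L θv ηv ≤ L Yθ Yη := by
    intro θv ηv
    rw [hL, hLY]
    have := hqnn (Sum.elim θv ηv - Sum.elim Yθ Yη)
    linarith
  refine ⟨fun θv => ⟨ηstar θv, hηmax θv, fun y hy => hηuniq θv y (hy (ηstar θv))⟩,
    fun ηv => ⟨θstar ηv, hθmax ηv, fun y hy => hθuniq ηv y (hy (θstar ηv))⟩,
    hglob, ?_, ?_⟩
  · -- uniqueness of the global maximizer
    intro θv ηv hmax
    have h1 : L θv ηv = 0 := le_antisymm (hLY ▸ hglob θv ηv) (hLY ▸ hmax Yθ Yη)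
    rw [hL] at h1
    have h0 : (Sum.elim θv ηv - Sum.elim Yθ Yη) ⬝ᵥ
        B.mulVec (Sum.elim θv ηv - Sum.elim Yθ Yη) = 0 := by linarith
    have hv := hzero _ h0
    constructor
    · refine funext fun i => ?_
      have := congrFun hv (Sum.inl i)
      simpa [sub_eq_zero] using this
    · refine funext fun i => ?_
      have := congrFun hv (Sum.inr i)
      simpa [sub_eq_zero] using this
  · -- the alternating sequence
    intro θ η hθ0 hηseq hθseq
    have hηd : ∀ k, η (k + 1) = ηstar (θ k) := fun k =>
      hηuniq (θ k) (η (k + 1)) (hηseq k (ηstar (θ k)))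
    have hθd : ∀ k, θ (k + 1) = θstar (η (k + 1)) := fun k =>
      hθuniq (η (k + 1)) (θ (k + 1)) (hθseq k (θstar (η (k + 1))))
    have hmatid : Fθ * (Fθ * Fθ)⁻¹ * A * (Fη * Fη)⁻¹ * Aᵀ = M₀ * Fθ := by
      have h1 : Fθ * (Fθ * Fθ)⁻¹ = Fθ⁻¹ := by
        rw [Matrix.mul_inv_rev, ← mul_assoc, Matrix.mul_nonsing_inv _ hθdet, one_mul]
      have h2 : M₀ * Fθ = Fθ⁻¹ * A * (Fη * Fη)⁻¹ * Aᵀ := by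
        rw [hM₀, mul_assoc, Matrix.nonsing_inv_mul _ hθdet, mul_one]
      rw [h1, h2]
    have hiter : ∀ k, Fθ.mulVec (θ k - Yθ) = (M₀ ^ k).mulVec (Fθ.mulVec (θ₀ - Yθ)) := by
      intro k
      induction k with
      | zero => simp [hθ0]
      | succ k ih =>
        have hstep : θ (k + 1) - Yθ =
            (Fθ * Fθ)⁻¹.mulVec (A.mulVec ((Fη * Fη)⁻¹.mulVec (Aᵀ.mulVec (θ k - Yθ)))) := by
          rw [hθd k, hθsub (η (k + 1)), hηd k, hηsub (θ k)]
          simp [Matrix.mulVec_neg]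
        calc Fθ.mulVec (θ (k + 1) - Yθ)
            = (M₀ * Fθ).mulVec (θ k - Yθ) := by
              rw [hstep]; simp only [Matrix.mulVec_mulVec, ← Matrix.mul_assoc]
              rw [hmatid]
          _ = M₀.mulVec (Fθ.mulVec (θ k - Yθ)) := (Matrix.mulVec_mulVec _ _ _).symm
          _ = M₀.mulVec ((M₀ ^ k).mulVec (Fθ.mulVec (θ₀ - Yθ))) := by rw [ih]
          _ = (M₀ ^ (k + 1)).mulVec (Fθ.mulVec (θ₀ - Yθ)) := by
              conv_lhs => rw [Matrix.mulVec_mulVec]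
              rw [← pow_succ']
    have hν : (0 : ℝ) ≤ specNorm M₀ := norm_nonneg _
    have hnorm : ∀ k, euclNorm ((M₀ ^ k).mulVec (Fθ.mulVec (θ₀ - Yθ)))
        ≤ specNorm M₀ ^ k * euclNorm (Fθ.mulVec (θ₀ - Yθ)) := by
      intro k
      induction k with
      | zero => simp
      | succ k ih =>
        calc euclNorm ((M₀ ^ (k + 1)).mulVec (Fθ.mulVec (θ₀ - Yθ)))
            = euclNorm (M₀.mulVec ((M₀ ^ k).mulVec (Fθ.mulVec (θ₀ - Yθ)))) := by
              conv_rhs => rw [Matrix.mulVec_mulVec, ← pow_succ']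
          _ ≤ specNorm M₀ * euclNorm ((M₀ ^ k).mulVec (Fθ.mulVec (θ₀ - Yθ))) :=
              euclNorm_mulVec_le _ _
          _ ≤ specNorm M₀ * (specNorm M₀ ^ k * euclNorm (Fθ.mulVec (θ₀ - Yθ))) :=
              mul_le_mul_of_nonneg_left ih hν
          _ = specNorm M₀ ^ (k + 1) * euclNorm (Fθ.mulVec (θ₀ - Yθ)) := by ring
    intro k
    exact ⟨hiter k, fun _ => (hiter k) ▸ hnorm k⟩
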